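/- For ε_1,...,ε_n independent Rademacher signs, a, b ∈ R^n, p ≥ 1, I ⊂ {1,...,n}, and I_1 ⊂ I the set of indices of the p largest values of (|a_i|)_{i∈I}: there is an absolute constant c_1 with (E |Σ_{i∈I} ε_i a_i b_i|^p)^{1/p} ≤ Σ_{i∈I_1} |a_i b_i| + c_1 √p (Σ_{i ∈ I∖I_1} a_i^2 b_i^2)^{1/2}. -/

import Mathlib

open scoped BigOperators

open Finset Real Nat

/-- Product formula for the Rademacher MGF. -/
private lemma rad_exp_sum (n : ℕ) (J : Finset (Fin n)) (x : Fin n → ℝ) :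
    (∑ ε : Fin n → Bool, Real.exp (∑ i ∈ J, (if ε i then (1:ℝ) else -1) * x i))
      = 2 ^ n * ∏ i ∈ J, Real.cosh (x i) := by
  have h1 : ∀ ε : Fin n → Bool,
      Real.exp (∑ i ∈ J, (if ε i then (1:ℝ) else -1) * x i)
        = ∏ i : Fin n,
            (if i ∈ J then Real.exp ((if ε i then (1:ℝ) else -1) * x i) else 1) := by
    intro ε
    rw [Real.exp_sum, Finset.prod_ite_mem, Finset.univ_inter]
  calc (∑ ε : Fin n → Bool, Real.exp (∑ i ∈ J, (if ε i then (1:ℝ) else -1) * x i))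
      = ∑ ε : Fin n → Bool, ∏ i : Fin n,
          (if i ∈ J then Real.exp ((if ε i then (1:ℝ) else -1) * x i) else 1) := by
        exact Finset.sum_congr rfl fun ε _ => h1 ε
    _ = ∑ ε ∈ Fintype.piFinset (fun _ : Fin n => (Finset.univ : Finset Bool)), ∏ i : Fin n,
          (if i ∈ J then Real.exp ((if ε i then (1:ℝ) else -1) * x i) else 1) := by
        rw [Fintype.piFinset_univ]
    _ = ∏ i : Fin n, ∑ b : Bool,
          (if i ∈ J then Real.exp ((if b then (1:ℝ) else -1) * x i) else 1) := by
        rw [Finset.prod_univ_sum]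
    _ = ∏ i : Fin n, (2 * if i ∈ J then Real.cosh (x i) else 1) := by
        refine Finset.prod_congr rfl fun i _ => ?_
        by_cases hi : i ∈ J <;>
          simp [hi, Fintype.sum_bool, Real.cosh_eq] <;> ring
    _ = 2 ^ n * ∏ i : Fin n, (if i ∈ J then Real.cosh (x i) else 1) := by
        rw [Finset.prod_mul_distrib, Finset.prod_const, Finset.card_univ, Fintype.card_fin]
    _ = 2 ^ n * ∏ i ∈ J, Real.cosh (x i) := by
        rw [Finset.prod_ite_mem, Finset.univ_inter]

/-- Trivial `L^∞` bound for the head. -/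
private lemma head_bound (n : ℕ) (J : Finset (Fin n)) (x : Fin n → ℝ) (p : ℕ) :
    ∑ ε : Fin n → Bool, |∑ i ∈ J, (if ε i then (1:ℝ) else -1) * x i| ^ p
      ≤ 2 ^ n * (∑ i ∈ J, |x i|) ^ p := by
  have hpt : ∀ ε : Fin n → Bool,
      |∑ i ∈ J, (if ε i then (1:ℝ) else -1) * x i| ^ p ≤ (∑ i ∈ J, |x i|) ^ p := by
    intro ε
    refine pow_le_pow_left₀ (abs_nonneg _) ?_ p
    calc |∑ i ∈ J, (if ε i then (1:ℝ) else -1) * x i|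
        ≤ ∑ i ∈ J, |(if ε i then (1:ℝ) else -1) * x i| := Finset.abs_sum_le_sum_abs _ _
      _ = ∑ i ∈ J, |x i| := by
          refine Finset.sum_congr rfl fun i _ => ?_
          rw [abs_mul]
          by_cases hi : ε i <;> simp [hi]
  calc ∑ ε : Fin n → Bool, |∑ i ∈ J, (if ε i then (1:ℝ) else -1) * x i| ^ p
      ≤ ∑ _ε : Fin n → Bool, (∑ i ∈ J, |x i|) ^ p := Finset.sum_le_sum fun ε _ => hpt ε
    _ = 2 ^ n * (∑ i ∈ J, |x i|) ^ p := by
        rw [Finset.sum_const, Finset.card_univ, nsmul_eq_mul]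
        congr 1
        simp [Fintype.card_fun]

/-- Khintchine-type bound with constant `4 √p`. -/
private lemma khintchine_bound (n : ℕ) (J : Finset (Fin n)) (x : Fin n → ℝ) (p : ℕ)
    (hp : 1 ≤ p) :
    ∑ ε : Fin n → Bool, |∑ i ∈ J, (if ε i then (1:ℝ) else -1) * x i| ^ p
      ≤ 2 ^ n * (4 * Real.sqrt p * Real.sqrt (∑ i ∈ J, x i ^ 2)) ^ p := by
  set s2 : ℝ := ∑ i ∈ J, x i ^ 2 with hs2
  have hs2nonneg : 0 ≤ s2 := Finset.sum_nonneg fun i _ => sq_nonneg _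
  set σ : ℝ := Real.sqrt s2 with hσdef
  by_cases hσ : σ = 0
  · -- all relevant `x i` vanish
    have hs20 : s2 = 0 := by
      have := Real.sqrt_eq_zero hs2nonneg |>.mp hσ
      exact this
    have hx : ∀ i ∈ J, x i = 0 := by
      intro i hi
      have h := (Finset.sum_eq_zero_iff_of_nonneg (fun i _ => sq_nonneg (x i))).mp hs20 i hi
      exact pow_eq_zero_iff (two_ne_zero) |>.mp h
    have hS : ∀ ε : Fin n → Bool, (∑ i ∈ J, (if ε i then (1:ℝ) else -1) * x i) = 0 := by
      intro ε
      refine Finset.sum_eq_zero fun i hi => by rw [hx i hi, mul_zero]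
    have hLHS : ∑ ε : Fin n → Bool, |∑ i ∈ J, (if ε i then (1:ℝ) else -1) * x i| ^ p = 0 := by
      refine Finset.sum_eq_zero fun ε _ => ?_
      rw [hS ε, abs_zero, zero_pow (by omega)]
    rw [hLHS]
    positivity
  · have hσpos : 0 < σ := lt_of_le_of_ne (Real.sqrt_nonneg _) (Ne.symm hσ)
    have hs2pos : 0 < s2 := Real.sqrt_pos.mp hσpos
    have hppos : (0:ℝ) < p := by exact_mod_cast Nat.lt_of_lt_of_le Nat.zero_lt_one hp
    have hsp : (0:ℝ) < Real.sqrt p := Real.sqrt_pos.mpr hppos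
    set lam : ℝ := Real.sqrt p / σ with hlamdef
    clear_value s2 σ lam
    have hlam : 0 < lam := hlamdef ▸ div_pos hsp hσpos
    have hlampow : (0:ℝ) < lam ^ p := pow_pos hlam p
    have hfacpos : (0:ℝ) < (Nat.factorial p : ℝ) := by exact_mod_cast Nat.factorial_pos p
    -- pointwise moment bound
    have hpoint : ∀ S : ℝ, |S| ^ p ≤
        (Nat.factorial p : ℝ) / lam ^ p * (Real.exp (lam * S) + Real.exp (-(lam * S))) := by
      intro S
      have h0 : (lam * |S|) ^ p / (Nat.factorial p : ℝ) ≤ Real.exp (lam * |S|) :=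
        Real.pow_div_factorial_le_exp (x := lam * |S|) (by positivity) p
      have h5 : Real.exp (lam * |S|) ≤ Real.exp (lam * S) + Real.exp (-(lam * S)) := by
        rcases abs_cases S with ⟨h, _⟩ | ⟨h, _⟩
        · rw [h]; exact le_add_of_nonneg_right (Real.exp_pos _).le
        · rw [h, mul_neg]; exact le_add_of_nonneg_left (Real.exp_pos _).le
      have hkey : (lam * |S|) ^ p ≤ (Nat.factorial p : ℝ) * (Real.exp (lam * S) + Real.exp (-(lam * S))) := by
        calc (lam * |S|) ^ p ≤ (Nat.factorial p : ℝ) * Real.exp (lam * |S|) := by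
              rw [div_le_iff₀ hfacpos] at h0; linarith [h0]
          _ ≤ (Nat.factorial p : ℝ) * (Real.exp (lam * S) + Real.exp (-(lam * S))) :=
              mul_le_mul_of_nonneg_left h5 hfacpos.le
      have hl : |S| ^ p = (lam * |S|) ^ p / lam ^ p := by
        rw [mul_pow, mul_div_cancel_left₀ _ hlampow.ne']
      rw [hl, div_mul_eq_mul_div]
      exact div_le_div_of_nonneg_right hkey hlampow.le
    -- mgf computation
    have e1 : (∑ ε : Fin n → Bool,
        Real.exp (lam * ∑ i ∈ J, (if ε i then (1:ℝ) else -1) * x i))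
        = 2 ^ n * ∏ i ∈ J, Real.cosh (lam * x i) := by
      rw [← rad_exp_sum n J (fun i => lam * x i)]
      refine Finset.sum_congr rfl fun ε _ => ?_
      congr 1
      rw [Finset.mul_sum]
      exact Finset.sum_congr rfl fun i _ => by ring
    have e2 : (∑ ε : Fin n → Bool,
        Real.exp (-(lam * ∑ i ∈ J, (if ε i then (1:ℝ) else -1) * x i)))
        = 2 ^ n * ∏ i ∈ J, Real.cosh (lam * x i) := by
      have h := rad_exp_sum n J (fun i => -(lam * x i))
      simp only [Real.cosh_neg] at h
      rw [← h]
      refine Finset.sum_congr rfl fun ε _ => ?_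
      congr 1
      rw [← neg_mul, Finset.mul_sum]
      exact Finset.sum_congr rfl fun i _ => by ring
    set P : ℝ := ∏ i ∈ J, Real.cosh (lam * x i) with hPdef
    have hPnonneg : 0 ≤ P := Finset.prod_nonneg fun i _ => (Real.cosh_pos _).le
    -- subgaussian bound on the product of cosh
    have hP : P ≤ Real.exp ((p : ℝ) / 2) := by
      have hsum : ∑ i ∈ J, (lam * x i) ^ 2 / 2 = (p : ℝ) / 2 := by
        have h1 : ∑ i ∈ J, (lam * x i) ^ 2 / 2 = lam ^ 2 * s2 / 2 := by
          rw [hs2, Finset.mul_sum, Finset.sum_div]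
          exact Finset.sum_congr rfl fun i _ => by ring
        have h2 : lam ^ 2 * s2 = (p : ℝ) := by
          rw [hlamdef, div_pow, hσdef, Real.sq_sqrt hs2nonneg, Real.sq_sqrt hppos.le,
            div_mul_cancel₀ _ hs2pos.ne']
        rw [h1, h2]
      calc P ≤ ∏ i ∈ J, Real.exp ((lam * x i) ^ 2 / 2) :=
            Finset.prod_le_prod (fun i _ => (Real.cosh_pos _).le)
              (fun i _ => Real.cosh_le_exp_half_sq _)
        _ = Real.exp (∑ i ∈ J, (lam * x i) ^ 2 / 2) := (Real.exp_sum _ _).symm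
        _ = Real.exp ((p : ℝ) / 2) := by rw [hsum]
    -- final numeric estimate
    have hnum : 2 * (Nat.factorial p : ℝ) * Real.exp ((p : ℝ) / 2) ≤ 4 ^ p * (p : ℝ) ^ p := by
      have h1 : (2 : ℝ) ≤ 2 ^ p := by
        calc (2 : ℝ) = 2 ^ 1 := (pow_one 2).symm
          _ ≤ 2 ^ p := pow_le_pow_right₀ one_le_two hp
      have h2 : (Nat.factorial p : ℝ) ≤ (p : ℝ) ^ p := by
        exact_mod_cast Nat.factorial_le_pow p
      have hehalf : Real.exp ((1:ℝ) / 2) ≤ 2 := by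
        have he : Real.exp ((1:ℝ) / 2) * Real.exp ((1:ℝ) / 2) = Real.exp 1 := by
          rw [← Real.exp_add]; norm_num
        nlinarith [Real.exp_pos ((1:ℝ) / 2), Real.exp_one_lt_d9]
      have h3 : Real.exp ((p : ℝ) / 2) ≤ 2 ^ p := by
        have : Real.exp ((p : ℝ) / 2) = Real.exp ((1:ℝ)/2) ^ p := by
          rw [← Real.exp_nat_mul]; congr 1; ring
        rw [this]
        exact pow_le_pow_left₀ (Real.exp_pos _).le hehalf p
      calc 2 * (Nat.factorial p : ℝ) * Real.exp ((p : ℝ) / 2)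
          ≤ 2 ^ p * (p : ℝ) ^ p * 2 ^ p := by
            refine mul_le_mul (mul_le_mul h1 h2 (by positivity) (by positivity)) h3
              (Real.exp_pos _).le (by positivity)
        _ = 4 ^ p * (p : ℝ) ^ p := by
            rw [show (4:ℝ) = 2 * 2 by norm_num, mul_pow]; ring
    have hfinal : 2 * (Nat.factorial p : ℝ) / lam ^ p * Real.exp ((p : ℝ) / 2)
        ≤ (4 * Real.sqrt p * σ) ^ p := by
      rw [div_mul_eq_mul_div, div_le_iff₀ hlampow, ← mul_pow]
      have hMl : 4 * Real.sqrt p * σ * lam = 4 * p := by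
        rw [hlamdef]
        have : 4 * Real.sqrt ↑p * σ * (Real.sqrt ↑p / σ)
            = 4 * (Real.sqrt ↑p * Real.sqrt ↑p) * (σ / σ) := by ring
        rw [this, Real.mul_self_sqrt hppos.le, div_self hσpos.ne', mul_one]
      rw [hMl, mul_pow]
      linarith [hnum]
    -- assemble
    calc ∑ ε : Fin n → Bool, |∑ i ∈ J, (if ε i then (1:ℝ) else -1) * x i| ^ p
        ≤ ∑ ε : Fin n → Bool, (Nat.factorial p : ℝ) / lam ^ p *
            (Real.exp (lam * ∑ i ∈ J, (if ε i then (1:ℝ) else -1) * x i)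
              + Real.exp (-(lam * ∑ i ∈ J, (if ε i then (1:ℝ) else -1) * x i))) :=
          Finset.sum_le_sum fun ε _ => hpoint _
      _ = (Nat.factorial p : ℝ) / lam ^ p * (2 ^ n * P + 2 ^ n * P) := by
          rw [← Finset.mul_sum, Finset.sum_add_distrib, e1, e2]
      _ = 2 ^ n * (2 * (Nat.factorial p : ℝ) / lam ^ p * P) := by ring
      _ ≤ 2 ^ n * (2 * (Nat.factorial p : ℝ) / lam ^ p * Real.exp ((p : ℝ) / 2)) := by
          have hc : 0 ≤ 2 * (Nat.factorial p : ℝ) / lam ^ p := by positivity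
          exact mul_le_mul_of_nonneg_left (mul_le_mul_of_nonneg_left hP hc) (by positivity)
      _ ≤ 2 ^ n * (4 * Real.sqrt p * σ) ^ p :=
          mul_le_mul_of_nonneg_left hfinal (by positivity)

theorem rademacher_sum_split_bound :
    ∃ c₁ : ℝ, 0 < c₁ ∧
      ∀ (n : ℕ) (a b : Fin n → ℝ) (I I₁ : Finset (Fin n)) (p : ℕ), 1 ≤ p →
        I₁ ⊆ I → I₁.card = min p I.card →
        (∀ i ∈ I \ I₁, ∀ j ∈ I₁, |a i| ≤ |a j|) →
        ((∑ ε : Fin n → Bool,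
            |∑ i ∈ I, (if ε i then (1:ℝ) else -1) * a i * b i| ^ (p : ℝ)) / 2 ^ n)
            ^ (p : ℝ)⁻¹
          ≤ (∑ i ∈ I₁, |a i * b i|)
            + c₁ * Real.sqrt p * Real.sqrt (∑ i ∈ I \ I₁, a i ^ 2 * b i ^ 2) := by
  refine ⟨4, by norm_num, ?_⟩
  intro n a b I I₁ p hp hsub _h1 _h2
  have hq1 : (1:ℝ) ≤ (p:ℝ) := by exact_mod_cast hp
  have hpne : p ≠ 0 := by omega
  have h2n : (0:ℝ) < 2 ^ n := by positivity
  set T : (Fin n → Bool) → ℝ :=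
    fun ε => ∑ i ∈ I₁, (if ε i then (1:ℝ) else -1) * (a i * b i) with hT
  set S : (Fin n → Bool) → ℝ :=
    fun ε => ∑ i ∈ I \ I₁, (if ε i then (1:ℝ) else -1) * (a i * b i) with hS
  set M₁ : ℝ := ∑ i ∈ I₁, |a i * b i| with hM₁
  set M₂ : ℝ := 4 * Real.sqrt p * Real.sqrt (∑ i ∈ I \ I₁, a i ^ 2 * b i ^ 2) with hM₂
  have hM₁0 : 0 ≤ M₁ := Finset.sum_nonneg fun i _ => abs_nonneg _
  have hM₂0 : 0 ≤ M₂ := by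
    rw [hM₂]; positivity
  -- split the sum over `I`
  have hsplit : ∀ ε : Fin n → Bool,
      (∑ i ∈ I, (if ε i then (1:ℝ) else -1) * a i * b i) = T ε + S ε := by
    intro ε
    have h1 : (∑ i ∈ I, (if ε i then (1:ℝ) else -1) * a i * b i)
        = ∑ i ∈ I, (if ε i then (1:ℝ) else -1) * (a i * b i) :=
      Finset.sum_congr rfl fun i _ => by ring
    rw [h1, ← Finset.sum_sdiff hsub, hT, hS, add_comm]
  have hgoalsum : (∑ ε : Fin n → Bool,
      |∑ i ∈ I, (if ε i then (1:ℝ) else -1) * a i * b i| ^ (p : ℝ))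
      = ∑ ε : Fin n → Bool, |T ε + S ε| ^ (p : ℝ) :=
    Finset.sum_congr rfl fun ε _ => by rw [hsplit ε]
  rw [hgoalsum]
  -- generic conversion from a `p`-th moment bound to an `L^p` norm bound
  have hbound : ∀ (f : (Fin n → Bool) → ℝ) (M : ℝ), 0 ≤ M →
      (∑ ε : Fin n → Bool, |f ε| ^ (p : ℝ)) ≤ 2 ^ n * M ^ p →
      ((∑ ε : Fin n → Bool, |f ε| ^ (p : ℝ)) / 2 ^ n) ^ (p : ℝ)⁻¹ ≤ M := by
    intro f M hM h
    have h0 : (0:ℝ) ≤ ∑ ε : Fin n → Bool, |f ε| ^ (p : ℝ) :=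
      Finset.sum_nonneg fun ε _ => Real.rpow_nonneg (abs_nonneg _) _
    have hdiv : (∑ ε : Fin n → Bool, |f ε| ^ (p : ℝ)) / 2 ^ n ≤ M ^ p := by
      rw [div_le_iff₀ h2n, mul_comm]; exact h
    calc ((∑ ε : Fin n → Bool, |f ε| ^ (p : ℝ)) / 2 ^ n) ^ (p : ℝ)⁻¹
        ≤ (M ^ p) ^ (p : ℝ)⁻¹ :=
          Real.rpow_le_rpow (by positivity) hdiv (by positivity)
      _ = M := Real.pow_rpow_inv_natCast hM hpne
  -- bounds for the two pieces
  have hTsum : (∑ ε : Fin n → Bool, |T ε| ^ (p : ℝ)) ≤ 2 ^ n * M₁ ^ p := by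
    simp only [Real.rpow_natCast]
    exact head_bound n I₁ (fun i => a i * b i) p
  have hSsum : (∑ ε : Fin n → Bool, |S ε| ^ (p : ℝ)) ≤ 2 ^ n * M₂ ^ p := by
    simp only [Real.rpow_natCast]
    have h := khintchine_bound n (I \ I₁) (fun i => a i * b i) p hp
    have hsq : (∑ i ∈ I \ I₁, (a i * b i) ^ 2) = ∑ i ∈ I \ I₁, a i ^ 2 * b i ^ 2 :=
      Finset.sum_congr rfl fun i _ => mul_pow _ _ _
    rw [hsq] at h
    exact h
  -- Minkowski
  have hmink : ((∑ ε : Fin n → Bool, |T ε + S ε| ^ (p : ℝ)) / 2 ^ n) ^ (p : ℝ)⁻¹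
      ≤ ((∑ ε : Fin n → Bool, |T ε| ^ (p : ℝ)) / 2 ^ n) ^ (p : ℝ)⁻¹
        + ((∑ ε : Fin n → Bool, |S ε| ^ (p : ℝ)) / 2 ^ n) ^ (p : ℝ)⁻¹ := by
    have hnn : ∀ g : (Fin n → Bool) → ℝ,
        (0:ℝ) ≤ ∑ ε : Fin n → Bool, |g ε| ^ (p : ℝ) :=
      fun g => Finset.sum_nonneg fun ε _ => Real.rpow_nonneg (abs_nonneg _) _
    rw [Real.div_rpow (hnn _) h2n.le, Real.div_rpow (hnn T) h2n.le,
      Real.div_rpow (hnn S) h2n.le, ← add_div]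
    refine div_le_div_of_nonneg_right ?_ (Real.rpow_nonneg h2n.le _) |>.trans_eq rfl
    have := Real.Lp_add_le (Finset.univ) T S hq1
    rwa [one_div] at this
  calc ((∑ ε : Fin n → Bool, |T ε + S ε| ^ (p : ℝ)) / 2 ^ n) ^ (p : ℝ)⁻¹
      ≤ ((∑ ε : Fin n → Bool, |T ε| ^ (p : ℝ)) / 2 ^ n) ^ (p : ℝ)⁻¹
        + ((∑ ε : Fin n → Bool, |S ε| ^ (p : ℝ)) / 2 ^ n) ^ (p : ℝ)⁻¹ := hmink
    _ ≤ M₁ + M₂ := add_le_add (hbound T M₁ hM₁0 hTsum) (hbound S M₂ hM₂0 hSsum)
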